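/- Assume that for every x ∈ G with x ∉ N, the conjugate representation π^x is not isomorphic to π (i.e., there is no invertible linear map T : V → V with T ∘ π(x⁻¹gx) = π(g) ∘ T for all g ∈ N). Then the induced representation Ind_N^G π is irreducible. -/
import Mathlib

def IndSubmodule {G : Type*} [Group G] (H : Subgroup G) {W : Type*}
    [AddCommGroup W] [Module ℂ W] (ρ : Representation ℂ ↥H W) :
    Submodule ℂ (G → W) where
  carrier := {f | ∀ (g : G) (h : ↥H), f (g * ↑h) = ρ h⁻¹ (f g)}
  add_mem' := by
    intro a b ha hb g h
    simp only [Pi.add_apply, ha g h, hb g h, map_add]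
  zero_mem' := by
    intro g h
    simp
  smul_mem' := by
    intro c f hf g h
    simp only [Pi.smul_apply, hf g h, map_smul]

def IndRep {G : Type*} [Group G] (H : Subgroup G) {W : Type*}
    [AddCommGroup W] [Module ℂ W] (ρ : Representation ℂ ↥H W) :
    Representation ℂ G ↥(IndSubmodule H ρ) where
  toFun x :=
    { toFun := fun f => ⟨fun g => (f : G → W) (x⁻¹ * g), by
        intro g h
        show (f : G → W) (x⁻¹ * (g * ↑h)) = ρ h⁻¹ ((f : G → W) (x⁻¹ * g))
        rw [← mul_assoc]
        exact f.2 (x⁻¹ * g) h⟩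
      map_add' := by intro a b; ext g; rfl
      map_smul' := by intro c a; ext g; rfl }
  map_one' := by
    ext f g
    simp
  map_mul' := by
    intro a b
    ext f g
    simp [mul_assoc]

namespace IndProof
open scoped Classical

variable {G : Type*} [Group G] {N : Subgroup G}
  {V : Type*} [AddCommGroup V] [Module ℂ V] {π : Representation ℂ ↥N V}

lemma ind_val (f : ↥(IndSubmodule N π)) {x y : G} (h : x⁻¹ * y ∈ N) :
    (f : G → V) y = π (⟨x⁻¹ * y, h⟩ : ↥N)⁻¹ ((f : G → V) x) := by
  have h2 := f.2 x ⟨x⁻¹ * y, h⟩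
  simpa only [Subgroup.coe_mk, mul_inv_cancel_left] using h2

lemma ind_zero (f : ↥(IndSubmodule N π)) {x y : G} (h : x⁻¹ * y ∈ N)
    (hx : (f : G → V) x = 0) : (f : G → V) y = 0 := by
  rw [ind_val f h, hx, map_zero]

lemma indRep_apply (x : G) (f : ↥(IndSubmodule N π)) (g : G) :
    ((IndRep N π x f : ↥(IndSubmodule N π)) : G → V) g = (f : G → V) (x⁻¹ * g) := rfl

lemma indRep_one (n : ↥N) (f : ↥(IndSubmodule N π)) :
    ((IndRep N π ↑n f : ↥(IndSubmodule N π)) : G → V) 1 = π n ((f : G → V) 1) := by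
  have h2 := f.2 1 n⁻¹
  rw [indRep_apply]
  simpa using h2

variable (π) in
noncomputable def delta (w : V) : ↥(IndSubmodule N π) :=
  ⟨fun g => if h : g ∈ N then π (⟨g, h⟩ : ↥N)⁻¹ w else 0, by
    intro g h
    beta_reduce
    by_cases hg : g ∈ N
    · have hgh : g * ↑h ∈ N := N.mul_mem hg h.2
      rw [dif_pos hgh, dif_pos hg]
      have : (⟨g * ↑h, hgh⟩ : ↥N)⁻¹ = h⁻¹ * (⟨g, hg⟩ : ↥N)⁻¹ := by
        ext; simp [mul_inv_rev]
      rw [this, map_mul]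
      rfl
    · have hgh : g * ↑h ∉ N := by
        intro hmem
        exact hg (by simpa using N.mul_mem hmem (N.inv_mem h.2))
      rw [dif_neg hgh, dif_neg hg, map_zero]⟩

variable (π) in
noncomputable def deltaL : V →ₗ[ℂ] ↥(IndSubmodule N π) where
  toFun := delta π
  map_add' := by
    intro a b
    apply Subtype.ext
    funext g
    show _ = (delta π a : G → V) g + (delta π b : G → V) g
    by_cases hg : g ∈ N <;> simp [delta, hg]
  map_smul' := by
    intro c a
    apply Subtype.ext
    funext g
    show _ = c • (delta π a : G → V) g
    by_cases hg : g ∈ N <;> simp [delta, hg]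

lemma delta_apply_mem (w : V) {g : G} (hg : g ∈ N) :
    (delta π w : G → V) g = π (⟨g, hg⟩ : ↥N)⁻¹ w := dif_pos hg

lemma delta_apply_not_mem (w : V) {g : G} (hg : g ∉ N) :
    (delta π w : G → V) g = 0 := dif_neg hg

lemma delta_conj (n : ↥N) (w : V) :
    delta π (π n w) = IndRep N π ↑n (delta π w) := by
  apply Subtype.ext
  funext g
  rw [indRep_apply]
  by_cases hg : g ∈ N
  · have hg' : (↑n)⁻¹ * g ∈ N := N.mul_mem (N.inv_mem n.2) hg
    rw [delta_apply_mem _ hg, delta_apply_mem _ hg']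
    have : (⟨(↑n)⁻¹ * g, hg'⟩ : ↥N) = n⁻¹ * ⟨g, hg⟩ := by ext; rfl
    rw [this, mul_inv_rev, inv_inv, map_mul]
    rfl
  · have hg' : (↑n)⁻¹ * g ∉ N := by
      intro hmem
      exact hg (by simpa using N.mul_mem n.2 hmem)
    rw [delta_apply_not_mem _ hg, delta_apply_not_mem _ hg']

end IndProof

set_option maxHeartbeats 1000000 in
set_option synthInstance.maxHeartbeats 400000 in
theorem induced_irreducible_of_not_iso {G : Type*} [Group G] (N : Subgroup G)
    (hN : N.Normal) [N.FiniteIndex]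
    {V : Type*} [AddCommGroup V] [Module ℂ V] [Nontrivial V]
    (π : Representation ℂ ↥N V)
    (hirr : ∀ U : Submodule ℂ V, (∀ (g : ↥N) (v : V), v ∈ U → π g v ∈ U) →
      U = ⊥ ∨ U = ⊤)
    (hnoniso : ∀ x : G, x ∉ N →
      ¬∃ T : V ≃ₗ[ℂ] V, ∀ g g' : ↥N, (↑g' : G) = x⁻¹ * ↑g * x →
        (T : V →ₗ[ℂ] V) ∘ₗ (π g' : V →ₗ[ℂ] V) =
          (π g : V →ₗ[ℂ] V) ∘ₗ (T : V →ₗ[ℂ] V)) :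
    ∀ U : Submodule ℂ ↥(IndSubmodule N π),
      (∀ (x : G) (w : ↥(IndSubmodule N π)), w ∈ U → IndRep N π x w ∈ U) →
      U = ⊥ ∨ U = ⊤ := by
  classical
  intro U hU
  by_cases hUbot : U = ⊥
  · exact Or.inl hUbot
  right
  obtain ⟨f0, hf0U, hf0ne⟩ : ∃ f ∈ U, f ≠ 0 := by
    by_contra hcon
    push_neg at hcon
    exact hUbot ((Submodule.eq_bot_iff U).2 hcon)
  haveI : Fintype (G ⧸ N) := Fintype.ofFinite _
  -- support of an element, as a set of cosets
  let sset : ↥(IndSubmodule N π) → Set (G ⧸ N) := fun f => {c | (f : G → V) c.out ≠ 0}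
  let k : ↥(IndSubmodule N π) → ℕ := fun f => (sset f).ncard
  have hmkmem : ∀ y : G, (Quotient.out (QuotientGroup.mk y : G ⧸ N))⁻¹ * y ∈ N := by
    intro y
    rw [← QuotientGroup.eq, QuotientGroup.out_eq']
  have hout_zero : ∀ (f : ↥(IndSubmodule N π)) (y : G),
      ((f : G → V) (Quotient.out (QuotientGroup.mk y : G ⧸ N)) = 0) ↔ (f : G → V) y = 0 := by
    intro f y
    constructor
    · intro h; exact IndProof.ind_zero f (hmkmem y) h
    · intro h
      refine IndProof.ind_zero f (x := y) ?_ h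
      have h2 := N.inv_mem (hmkmem y)
      simpa [mul_inv_rev] using h2
  have hmem_sset : ∀ (f : ↥(IndSubmodule N π)) (y : G),
      ((QuotientGroup.mk y : G ⧸ N) ∈ sset f ↔ (f : G → V) y ≠ 0) := by
    intro f y
    simp only [sset, Set.mem_setOf_eq, ne_eq]
    rw [hout_zero f y]
  -- translation invariance of the size of the support
  have hktrans : ∀ (x : G) (g : ↥(IndSubmodule N π)), k (IndRep N π x g) = k g := by
    intro x g
    have hset : sset (IndRep N π x g) = (fun c => x • c) '' sset g := by
      ext c
      constructor
      · intro hcmem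
        refine ⟨x⁻¹ • c, ?_, smul_inv_smul x c⟩
        have h1 : (g : G → V) (x⁻¹ * c.out) ≠ 0 := hcmem
        have h2 : (QuotientGroup.mk (x⁻¹ * c.out) : G ⧸ N) ∈ sset g := (hmem_sset g _).2 h1
        have h3 : (QuotientGroup.mk (x⁻¹ * c.out) : G ⧸ N) = x⁻¹ • c := by
          conv_rhs => rw [← QuotientGroup.out_eq' c]
          rfl
        rwa [h3] at h2
      · rintro ⟨d, hd, rfl⟩
        show (g : G → V) (x⁻¹ * (x • d).out) ≠ 0
        have hd' : (g : G → V) d.out ≠ 0 := hd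
        intro hzero
        apply hd'
        have h3 : (QuotientGroup.mk (x⁻¹ * Quotient.out (x • d)) : G ⧸ N) = d := by
          have h5 : (QuotientGroup.mk (x⁻¹ * Quotient.out (x • d)) : G ⧸ N)
              = x⁻¹ • (QuotientGroup.mk (Quotient.out (x • d)) : G ⧸ N) := rfl
          rw [h5, QuotientGroup.out_eq', inv_smul_smul]
        have h4 : (g : G → V)
            (Quotient.out (QuotientGroup.mk (x⁻¹ * Quotient.out (x • d)) : G ⧸ N)) = 0 :=
          (hout_zero g _).2 hzero
        rw [h3] at h4
        exact h4
    show (sset (IndRep N π x g)).ncard = (sset g).ncard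
    rw [hset, Set.ncard_image_of_injective _ (MulAction.injective x)]
  -- choose a nonzero element of U of minimal support
  obtain ⟨f1, hf1U, hf1ne, hf1k⟩ := Nat.sInf_mem
    (⟨k f0, f0, hf0U, hf0ne, rfl⟩ : Set.Nonempty {n | ∃ f, f ∈ U ∧ f ≠ 0 ∧ k f = n})
  have hmin : ∀ g : ↥(IndSubmodule N π), g ∈ U → g ≠ 0 → k f1 ≤ k g := by
    intro g hg hgne
    rw [hf1k]
    exact Nat.sInf_le ⟨g, hg, hgne, rfl⟩
  -- translate so that the value at 1 is nonzero
  obtain ⟨y, hy⟩ : ∃ y : G, (f1 : G → V) y ≠ 0 := by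
    by_contra hcon
    push_neg at hcon
    exact hf1ne (Subtype.ext (funext hcon))
  set f : ↥(IndSubmodule N π) := IndRep N π y⁻¹ f1 with hfdef
  have hfU : f ∈ U := hU y⁻¹ f1 hf1U
  have hf1' : (f : G → V) 1 ≠ 0 := by
    show (f1 : G → V) (y⁻¹⁻¹ * 1) ≠ 0
    simpa using hy
  have hfne : f ≠ 0 := by
    intro h
    apply hf1'
    rw [h]
    rfl
  have hfmin : ∀ g : ↥(IndSubmodule N π), g ∈ U → g ≠ 0 → k f ≤ k g := by
    intro g hg hgne
    rw [show k f = k f1 from hktrans y⁻¹ f1]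
    exact hmin g hg hgne
  -- the submodule U' of elements of U with support inside the support of f
  obtain ⟨U', hU'mem⟩ : ∃ U' : Submodule ℂ ↥(IndSubmodule N π), ∀ g : ↥(IndSubmodule N π),
      g ∈ U' ↔ (g ∈ U ∧ ∀ z : G, (f : G → V) z = 0 → (g : G → V) z = 0) := by
    refine ⟨{ carrier := {g | g ∈ U ∧ ∀ z : G, (f : G → V) z = 0 → (g : G → V) z = 0}
              add_mem' := ?_
              zero_mem' := ⟨U.zero_mem, fun z _ => rfl⟩
              smul_mem' := ?_ }, fun g => Iff.rfl⟩
    · rintro a b ⟨haU, ha⟩ ⟨hbU, hb⟩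
      refine ⟨U.add_mem haU hbU, fun z hz => ?_⟩
      show (a : G → V) z + (b : G → V) z = 0
      rw [ha z hz, hb z hz, add_zero]
    · rintro c a ⟨haU, ha⟩
      refine ⟨U.smul_mem c haU, fun z hz => ?_⟩
      show c • (a : G → V) z = 0
      rw [ha z hz, smul_zero]
  have hU'N : ∀ (n : ↥N) (g : ↥(IndSubmodule N π)), g ∈ U' → IndRep N π ↑n g ∈ U' := by
    intro n g hgmem
    obtain ⟨hgU, hg⟩ := (hU'mem g).1 hgmem
    refine (hU'mem _).2 ⟨hU ↑n g hgU, fun z hz => ?_⟩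
    show (g : G → V) ((↑n)⁻¹ * z) = 0
    apply hg
    refine IndProof.ind_zero f (x := z) ?_ hz
    have h7 := hN.conj_mem _ (N.inv_mem n.2) z⁻¹
    simpa [mul_assoc] using h7
  have hfU' : f ∈ U' := (hU'mem f).2 ⟨hfU, fun z hz => hz⟩
  let ev1 : ↥U' →ₗ[ℂ] V :=
    { toFun := fun g => ((g : ↥(IndSubmodule N π)) : G → V) 1
      map_add' := fun a b => rfl
      map_smul' := fun c a => rfl }
  have hev1_zero : ∀ a : ↥U', ev1 a = 0 → a = 0 := by
    intro a ha1
    by_contra hane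
    have haIndne : (a : ↥(IndSubmodule N π)) ≠ 0 := fun h => hane (Subtype.ext h)
    obtain ⟨haU, hasupp⟩ := (hU'mem a.1).1 a.2
    have hale : k f ≤ k ↑a := hfmin ↑a haU haIndne
    have hsub : sset (↑a : ↥(IndSubmodule N π)) ⊂ sset f := by
      constructor
      · intro c hc
        intro hfc0
        exact hc (hasupp c.out hfc0)
      · intro hsup
        have h1 : (QuotientGroup.mk (1:G) : G ⧸ N) ∈ sset f := (hmem_sset f 1).2 hf1'
        have h2 := hsup h1
        rw [hmem_sset] at h2
        exact h2 ha1
    have hlt : k (↑a : ↥(IndSubmodule N π)) < k f := Set.ncard_lt_ncard hsub (Set.toFinite _)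
    omega
  have hev1_inj : Function.Injective ev1 := by
    intro a b hab
    have hz : ev1 (a - b) = 0 := by
      show ((a.1 : G → V) 1) - ((b.1 : G → V) 1) = 0
      have hab' : ((a.1 : G → V) 1) = ((b.1 : G → V) 1) := hab
      rw [hab', sub_self]
    have h := hev1_zero (a - b) hz
    exact sub_eq_zero.mp h
  have hev1_surj : Function.Surjective ev1 := by
    have hinv : ∀ (n : ↥N) (v : V), v ∈ LinearMap.range ev1 → π n v ∈ LinearMap.range ev1 := by
      intro n v hv
      obtain ⟨a, rfl⟩ := hv
      refine ⟨⟨IndRep N π ↑n a.1, hU'N n a.1 a.2⟩, ?_⟩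
      show ev1 ⟨IndRep N π ↑n a.1, hU'N n a.1 a.2⟩ = π n (ev1 a)
      exact IndProof.indRep_one n a.1
    rcases hirr (LinearMap.range ev1) hinv with h | h
    · exfalso
      have h1 : (f : G → V) 1 ∈ LinearMap.range ev1 := ⟨⟨f, hfU'⟩, rfl⟩
      rw [h, Submodule.mem_bot] at h1
      exact hf1' h1
    · exact (LinearMap.range_eq_top).mp h
  let e : ↥U' ≃ₗ[ℂ] V := LinearEquiv.ofBijective ev1 ⟨hev1_inj, hev1_surj⟩
  have hconjmem : ∀ (x : G) (n : ↥N), x⁻¹ * ↑n * x ∈ N := by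
    intro x n
    have h8 := hN.conj_mem _ n.2 x⁻¹
    simpa using h8
  -- f is supported on N
  have hsuppN : ∀ z : G, z ∉ N → (f : G → V) z = 0 := by
    intro x hxN
    by_contra hfx
    let evx : ↥U' →ₗ[ℂ] V :=
      { toFun := fun g => ((g : ↥(IndSubmodule N π)) : G → V) x
        map_add' := fun a b => rfl
        map_smul' := fun c a => rfl }
    let Tl : V →ₗ[ℂ] V := evx ∘ₗ (e.symm : V →ₗ[ℂ] ↥U')
    have hTf1 : Tl ((f : G → V) 1) = (f : G → V) x := by
      have h0 : e.symm ((f : G → V) 1) = ⟨f, hfU'⟩ := by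
        apply e.injective
        rw [LinearEquiv.apply_symm_apply]
        rfl
      show evx (e.symm ((f : G → V) 1)) = _
      rw [h0]
      rfl
    have hT : ∀ (n : ↥N) (w : V),
        Tl (π n w) = π ⟨x⁻¹ * ↑n * x, hconjmem x n⟩ (Tl w) := by
      intro n w
      have hsymm : e.symm (π n w) =
          ⟨IndRep N π ↑n ↑(e.symm w), hU'N n ↑(e.symm w) (e.symm w).2⟩ := by
        apply e.injective
        rw [LinearEquiv.apply_symm_apply]
        have h9 : e ⟨IndRep N π ↑n ↑(e.symm w), hU'N n ↑(e.symm w) (e.symm w).2⟩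
            = ((IndRep N π ↑n ↑(e.symm w) : ↥(IndSubmodule N π)) : G → V) 1 := rfl
        rw [h9, IndProof.indRep_one]
        exact (congrArg (π n) (e.apply_symm_apply w)).symm
      have h10 : Tl (π n w) = ((IndRep N π ↑n ↑(e.symm w) : ↥(IndSubmodule N π)) : G → V) x := by
        show evx (e.symm (π n w)) = _
        rw [hsymm]
        rfl
      rw [h10]
      have hmem : x⁻¹ * ((↑n)⁻¹ * x) ∈ N := by
        have := hconjmem x n⁻¹
        simpa [mul_assoc] using this
      have hval := IndProof.ind_val (↑(e.symm w) : ↥(IndSubmodule N π)) hmem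
      have h11 : ((IndRep N π ↑n ↑(e.symm w) : ↥(IndSubmodule N π)) : G → V) x
          = ((↑(e.symm w) : ↥(IndSubmodule N π)) : G → V) ((↑n)⁻¹ * x) := rfl
      rw [h11, hval]
      have h12 : (⟨x⁻¹ * ((↑n)⁻¹ * x), hmem⟩ : ↥N)⁻¹ = ⟨x⁻¹ * ↑n * x, hconjmem x n⟩ := by
        ext
        simp [mul_assoc]
      rw [h12]
      rfl
    have hker_inv : ∀ (n : ↥N) (v : V), v ∈ LinearMap.ker Tl → π n v ∈ LinearMap.ker Tl := by
      intro n v hv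
      rw [LinearMap.mem_ker] at hv ⊢
      rw [hT n v, hv, map_zero]
    have hTker : LinearMap.ker Tl = ⊥ := by
      rcases hirr (LinearMap.ker Tl) hker_inv with h | h
      · exact h
      · exfalso
        have h13 : (f : G → V) 1 ∈ LinearMap.ker Tl := by rw [h]; trivial
        rw [LinearMap.mem_ker, hTf1] at h13
        exact hfx h13
    have hrange_inv : ∀ (m : ↥N) (v : V),
        v ∈ LinearMap.range Tl → π m v ∈ LinearMap.range Tl := by
      intro m v hv
      obtain ⟨w, rfl⟩ := hv
      set n : ↥N := ⟨x * ↑m * x⁻¹, by simpa using hN.conj_mem _ m.2 x⟩ with hndef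
      have hnm : (⟨x⁻¹ * ↑n * x, hconjmem x n⟩ : ↥N) = m := by
        ext
        show x⁻¹ * (x * ↑m * x⁻¹) * x = ↑m
        group
      refine ⟨π n w, ?_⟩
      rw [hT n w, hnm]
    have hTrange : LinearMap.range Tl = ⊤ := by
      rcases hirr (LinearMap.range Tl) hrange_inv with h | h
      · exfalso
        have h14 : (f : G → V) x ∈ LinearMap.range Tl := ⟨(f : G → V) 1, hTf1⟩
        rw [h, Submodule.mem_bot] at h14
        exact hfx h14
      · exact h
    let T : V ≃ₗ[ℂ] V := LinearEquiv.ofBijective Tl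
      ⟨LinearMap.ker_eq_bot.mp hTker, LinearMap.range_eq_top.mp hTrange⟩
    apply hnoniso x hxN
    refine ⟨T.symm, ?_⟩
    intro g g' hgg'
    apply LinearMap.ext
    intro w
    show T.symm (π g' w) = π g (T.symm w)
    apply T.injective
    have h15 : T (T.symm (π g' w)) = π g' w := T.apply_symm_apply _
    have h16 : T (π g (T.symm w)) = Tl (π g (T.symm w)) := rfl
    rw [h15, h16, hT g (T.symm w)]
    have h17 : (⟨x⁻¹ * ↑g * x, hconjmem x g⟩ : ↥N) = g' := Subtype.ext hgg'.symm
    rw [h17]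
    congr 1
    exact (T.apply_symm_apply w).symm
  -- f is a delta function
  have hfd : f = IndProof.deltaL π ((f : G → V) 1) := by
    apply Subtype.ext
    funext g
    by_cases hg : g ∈ N
    · have h18 : (IndProof.deltaL π ((f : G → V) 1) : G → V) g
          = π (⟨g, hg⟩ : ↥N)⁻¹ ((f : G → V) 1) := IndProof.delta_apply_mem _ hg
      rw [h18]
      have hmem1 : (1 : G)⁻¹ * g ∈ N := by simpa using hg
      have h19 := IndProof.ind_val f hmem1
      rw [h19]
      congr 2
      ext
      simp
    · have h20 : (IndProof.deltaL π ((f : G → V) 1) : G → V) g = 0 :=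
        IndProof.delta_apply_not_mem _ hg
      rw [h20]
      exact hsuppN g hg
  -- the submodule S of vectors whose delta lies in U
  have hSinv : ∀ (n : ↥N) (w : V), w ∈ Submodule.comap (IndProof.deltaL π) U →
      π n w ∈ Submodule.comap (IndProof.deltaL π) U := by
    intro n w hw
    show IndProof.deltaL π (π n w) ∈ U
    have h21 : IndProof.deltaL π (π n w) = IndRep N π ↑n (IndProof.deltaL π w) :=
      IndProof.delta_conj n w
    rw [h21]
    exact hU ↑n _ hw
  have hS : Submodule.comap (IndProof.deltaL π) U = ⊤ := by
    rcases hirr _ hSinv with h | h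
    · exfalso
      have h22 : (f : G → V) 1 ∈ Submodule.comap (IndProof.deltaL π) U := by
        show IndProof.deltaL π ((f : G → V) 1) ∈ U
        rw [← hfd]
        exact hfU
      rw [h, Submodule.mem_bot] at h22
      exact hf1' h22
    · exact h
  -- conclude : every element of the induced module lies in U
  rw [eq_top_iff]
  intro F _
  have hFsum : F = ∑ c : G ⧸ N, IndRep N π c.out (IndProof.deltaL π ((F : G → V) c.out)) := by
    apply Subtype.ext
    funext g
    have hcoe : ((∑ c : G ⧸ N,
          IndRep N π c.out (IndProof.deltaL π ((F : G → V) c.out)) : ↥(IndSubmodule N π)) : G → V)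
        = ∑ c : G ⧸ N,
          ((IndRep N π c.out (IndProof.deltaL π ((F : G → V) c.out)) : ↥(IndSubmodule N π)) : G → V) :=
      map_sum ((IndSubmodule N π).subtype) _ _
    rw [hcoe, Finset.sum_apply]
    have hzero : ∀ c : G ⧸ N, c ∈ Finset.univ → c ≠ QuotientGroup.mk g →
        ((IndRep N π c.out (IndProof.deltaL π ((F : G → V) c.out)) : ↥(IndSubmodule N π)) : G → V) g
          = 0 := by
      intro c _ hc
      show (IndProof.delta π ((F : G → V) c.out) : G → V) (c.out⁻¹ * g) = 0
      refine IndProof.delta_apply_not_mem _ ?_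
      intro hmem
      apply hc
      have h23 : (QuotientGroup.mk c.out : G ⧸ N) = QuotientGroup.mk g := QuotientGroup.eq.mpr hmem
      rwa [QuotientGroup.out_eq'] at h23
    have hmain : ((IndRep N π (Quotient.out (QuotientGroup.mk g : G ⧸ N))
          (IndProof.deltaL π ((F : G → V) (Quotient.out (QuotientGroup.mk g : G ⧸ N))))
            : ↥(IndSubmodule N π)) : G → V) g = (F : G → V) g := by
      show (IndProof.delta π ((F : G → V) (Quotient.out (QuotientGroup.mk g : G ⧸ N))) : G → V)
          ((Quotient.out (QuotientGroup.mk g : G ⧸ N))⁻¹ * g) = (F : G → V) g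
      rw [IndProof.delta_apply_mem _ (hmkmem g)]
      exact (IndProof.ind_val F (hmkmem g)).symm
    rw [Finset.sum_eq_single_of_mem (QuotientGroup.mk g : G ⧸ N) (Finset.mem_univ _) hzero, hmain]
  rw [hFsum]
  refine Submodule.sum_mem U fun c _ => hU _ _ ?_
  have h24 : (F : G → V) c.out ∈ Submodule.comap (IndProof.deltaL π) U := by
    rw [hS]
    trivial
  exact h24
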